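/- Let ξ₁,…,ξₙ be i.i.d. nonnegative with tail F̄ regularly varying of index −1, G the integrated tail, Sₖ = ξ₁+…+ξₖ. If (xₙ) satisfies liminf xₙ/(nG(xₙ)) > 0 and aₙ → a ∈ (0,∞), then max over 1 ≤ k ≤ n of P(Sₖ − kG(xₙ) ≥ aₙxₙ) = O(n F̄(xₙ)) as n → ∞. -/

import Mathlib

open MeasureTheory Set Filter
open scoped ENNReal


lemma integrableOn_anti {F : ℝ → ℝ} (h : Antitone F) (h0 : ∀ t, 0 ≤ F t)
    (h1 : ∀ t, F t ≤ 1) (a b : ℝ) : IntegrableOn F (Set.Ioc a b) := by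
  refine Integrable.mono' (g := fun _ => (1:ℝ))
    (integrableOn_const (C := (1:ℝ)) measure_Ioc_lt_top.ne)
    h.measurable.aestronglyMeasurable.restrict ?_
  exact Filter.Eventually.of_forall fun t => by
    rw [Real.norm_eq_abs, abs_of_nonneg (h0 t)]; exact h1 t

lemma kara (F : ℝ → ℝ) (hanti : Antitone F) (h0 : ∀ t, 0 ≤ F t) (h1 : ∀ t, F t ≤ 1)
    (T₀ : ℝ) (hT₀ : 1 ≤ T₀) (hratio : ∀ t, T₀ ≤ t → (3/8) * F t ≤ F (2*t))
    (hm : 0 < F (4*T₀)) :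
    ∃ M > 0, ∀ x, 2*T₀ ≤ x → ∫ t in Set.Ioc 0 (x^2), F (Real.sqrt t) ≤ M * (x^2 * F x) := by
  have hT0 : (0:ℝ) < T₀ := lt_of_lt_of_le one_pos hT₀
  set g : ℝ → ℝ := fun t => F (Real.sqrt t) with hg
  have hganti : Antitone g := fun s t hst => hanti (Real.sqrt_le_sqrt hst)
  have hg0 : ∀ t, 0 ≤ g t := fun t => h0 _
  have hg1 : ∀ t, g t ≤ 1 := fun t => h1 _
  have hgint : ∀ a b : ℝ, IntegrableOn g (Set.Ioc a b) := integrableOn_anti hganti hg0 hg1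
  set D : ℝ := 4*T₀^2 with hD
  have hDpos : 0 < D := by positivity
  have hsqrtD : Real.sqrt D = 2*T₀ := by
    rw [show D = (2*T₀)^2 by ring, Real.sqrt_sq (by positivity)]
  set M : ℝ := max 6 (1 / F (4*T₀)) with hM
  have hM6 : (6:ℝ) ≤ M := le_max_left _ _
  have hMpos : 0 < M := lt_of_lt_of_le (by norm_num) hM6
  -- base + inductive claim
  have key : ∀ n : ℕ, ∀ y : ℝ, D ≤ y → y ≤ 4^(n+1) * D →
      ∫ t in Set.Ioc 0 y, g t ≤ M * (y * g y) := by
    intro n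
    induction n with
    | zero =>
      intro y hy1 hy2
      have hy0 : 0 < y := lt_of_lt_of_le hDpos hy1
      have hsy : Real.sqrt y ≤ 4*T₀ := by
        rw [show 4*T₀ = Real.sqrt ((4*T₀)^2) from (Real.sqrt_sq (by positivity)).symm]
        apply Real.sqrt_le_sqrt
        have hy2' : y ≤ 16*T₀^2 := by norm_num [hD] at hy2; linarith
        nlinarith
      have hFy : F (4*T₀) ≤ g y := hanti hsy
      have hgy : 0 < g y := lt_of_lt_of_le hm hFy
      have step1 : ∫ t in Set.Ioc 0 y, g t ≤ y := by
        calc ∫ t in Set.Ioc 0 y, g t ≤ ∫ _ in Set.Ioc 0 y, (1:ℝ) := by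
              apply setIntegral_mono_on (hgint 0 y)
                (integrableOn_const (C := (1:ℝ)) measure_Ioc_lt_top.ne) measurableSet_Ioc
              intro t _; exact hg1 t
          _ = y := by simp [hy0.le]
      refine step1.trans ?_
      have h1M : 1 ≤ M * g y := by
        calc (1:ℝ) = (1 / F (4*T₀)) * F (4*T₀) := by field_simp
          _ ≤ M * g y := by
              apply mul_le_mul (le_max_right _ _) hFy hm.le hMpos.le
      nlinarith
    | succ n ih =>
      intro y hy1 hy2
      rcases le_or_gt y (4^(n+1)*D) with h | h
      · exact ih y hy1 h
      have h4D : 4*D ≤ y := by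
        have : (4:ℝ)*D ≤ 4^(n+1)*D := by
          have : (4:ℝ) ≤ 4^(n+1) := by
            calc (4:ℝ) = 4^1 := by norm_num
              _ ≤ 4^(n+1) := by
                apply pow_le_pow_right₀ (by norm_num); omega
          nlinarith
        linarith
      have hy0 : 0 < y := by linarith
      have hq1 : D ≤ y/4 := by linarith
      have hq2 : y/4 ≤ 4^(n+1)*D := by
        have : y ≤ 4^(n+2)*D := hy2
        have : y/4 ≤ 4^(n+2)*D/4 := by linarith
        calc y/4 ≤ 4^(n+2)*D/4 := this
          _ = 4^(n+1)*D := by ring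
      -- sqrt facts
      have hsq : Real.sqrt (y/4) = Real.sqrt y / 2 := by
        rw [show y/4 = y/2^2 by ring, show (2:ℝ)^2 = 2^2 from rfl]
        rw [show y/2^2 = y * (1/2)^2 by ring]
        rw [Real.sqrt_mul hy0.le, Real.sqrt_sq (by norm_num : (0:ℝ) ≤ 1/2)]
        ring
      have hsyT : 2*T₀ ≤ Real.sqrt y / 2 := by
        have : Real.sqrt (16*T₀^2) ≤ Real.sqrt y := by
          apply Real.sqrt_le_sqrt; rw [hD] at h4D; linarith
        rw [show 16*T₀^2 = (4*T₀)^2 by ring, Real.sqrt_sq (by positivity)] at this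
        linarith
      have hratio' : F (Real.sqrt y / 2) ≤ (8/3) * F (Real.sqrt y) := by
        have := hratio (Real.sqrt y / 2) (by linarith)
        have h2 : 2 * (Real.sqrt y / 2) = Real.sqrt y := by ring
        rw [h2] at this; linarith
      -- split integral
      have hsplit : ∫ t in Set.Ioc 0 y, g t
          = (∫ t in Set.Ioc 0 (y/4), g t) + ∫ t in Set.Ioc (y/4) y, g t := by
        rw [← setIntegral_union (Set.Ioc_disjoint_Ioc_of_le le_rfl) measurableSet_Ioc
          (hgint 0 (y/4)) (hgint (y/4) y), Set.Ioc_union_Ioc_eq_Ioc (by linarith) (by linarith)]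
      have hseg : ∫ t in Set.Ioc (y/4) y, g t ≤ (3/4*y) * ((8/3) * F (Real.sqrt y)) := by
        calc ∫ t in Set.Ioc (y/4) y, g t ≤ ∫ _ in Set.Ioc (y/4) y, g (y/4) := by
              apply setIntegral_mono_on (hgint _ _)
                (integrableOn_const (C := g (y/4)) measure_Ioc_lt_top.ne) measurableSet_Ioc
              intro t ht; exact hganti ht.1.le
          _ = (y - y/4) * g (y/4) := by
              rw [setIntegral_const, Real.volume_real_Ioc_of_le (by linarith),
                smul_eq_mul]
          _ ≤ (3/4*y) * ((8/3) * F (Real.sqrt y)) := by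
              have : g (y/4) ≤ (8/3) * F (Real.sqrt y) := by
                rw [hg]; dsimp only; rw [hsq]; exact hratio'
              have h34 : y - y/4 = 3/4*y := by ring
              rw [h34]
              apply mul_le_mul_of_nonneg_left this (by linarith)
      have hIH : ∫ t in Set.Ioc 0 (y/4), g t ≤ M * ((y/4) * ((8/3) * F (Real.sqrt y))) := by
        refine (ih (y/4) hq1 hq2).trans ?_
        have : g (y/4) ≤ (8/3) * F (Real.sqrt y) := by
          rw [hg]; dsimp only; rw [hsq]; exact hratio'
        have h4 : 0 ≤ y/4 := by linarith
        apply mul_le_mul_of_nonneg_left _ hMpos.le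
        apply mul_le_mul_of_nonneg_left this h4
      rw [hsplit]
      have hgy : g y = F (Real.sqrt y) := rfl
      have hFnn : 0 ≤ F (Real.sqrt y) := h0 _
      rw [hgy]
      nlinarith [mul_nonneg hy0.le hFnn]
  refine ⟨M, hMpos, fun x hxT => ?_⟩
  have hx0 : 0 < x := by linarith
  have hDx : D ≤ x^2 := by nlinarith
  obtain ⟨n, hn⟩ := pow_unbounded_of_one_lt (x^2/D) (by norm_num : (1:ℝ) < 4)
  have hx2 : x^2 ≤ 4^(n+1)*D := by
    have : x^2/D < 4^n := hn
    have h1 : x^2 < 4^n * D := by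
      rw [div_lt_iff₀ hDpos] at this; linarith
    have : (4:ℝ)^n ≤ 4^(n+1) := by
      apply pow_le_pow_right₀ (by norm_num); omega
    nlinarith [hDpos]
  have := key n (x^2) hDx hx2
  have hsx : Real.sqrt (x^2) = x := Real.sqrt_sq hx0.le
  calc ∫ t in Set.Ioc 0 (x^2), F (Real.sqrt t) = ∫ t in Set.Ioc 0 (x^2), g t := rfl
    _ ≤ M * (x^2 * g (x^2)) := this
    _ = M * (x^2 * F x) := by rw [hg]; dsimp only; rw [hsx]


lemma layercake_le {Ω : Type*} [MeasurableSpace Ω] (μ : Measure Ω) [IsProbabilityMeasure μ]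
    (Y : Ω → ℝ) (hY : Measurable Y) (hnn : ∀ ω, 0 ≤ Y ω) (B : ℝ) (hB : 0 < B)
    (hbd : ∀ ω, Y ω ≤ B) (H : ℝ → ℝ) (hHanti : Antitone H) (hH0 : ∀ t, 0 ≤ H t)
    (hH1 : ∀ t, H t ≤ 1) (hle : ∀ t, 0 < t → (μ {ω | t < Y ω}).toReal ≤ H t) :
    ∫ ω, Y ω ∂μ ≤ ∫ t in Set.Ioc 0 B, H t := by
  have hint : Integrable Y μ := by
    refine Integrable.mono' (g := fun _ => B) (integrable_const B)
      hY.aestronglyMeasurable (Filter.Eventually.of_forall fun ω => ?_)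
    rw [Real.norm_eq_abs, abs_of_nonneg (hnn ω)]; exact hbd ω
  rw [hint.integral_eq_integral_meas_lt (Filter.Eventually.of_forall hnn)]
  simp only [measureReal_def]
  set h : ℝ → ℝ := fun t => (μ {ω | t < Y ω}).toReal with hh
  have hhanti : Antitone h := by
    intro s t hst
    exact ENNReal.toReal_mono (measure_ne_top _ _)
      (measure_mono (fun ω (hω : t < Y ω) => lt_of_le_of_lt hst hω))
  have hh0 : ∀ t, 0 ≤ h t := fun t => ENNReal.toReal_nonneg
  have hh1 : ∀ t, h t ≤ 1 := fun t => by
    have := ENNReal.toReal_mono ENNReal.one_ne_top (prob_le_one (μ := μ) (s := {ω | t < Y ω}))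
    simpa using this
  have hzero : ∀ t ∈ Set.Ioi B, h t = 0 := by
    intro t ht
    have : {ω | t < Y ω} = ∅ := by
      ext ω; simp only [Set.mem_setOf_eq, Set.mem_empty_iff_false, iff_false, not_lt]
      exact (hbd ω).trans (le_of_lt ht)
    rw [hh]; dsimp only; rw [this, measure_empty]; norm_num
  have hsplit : Set.Ioi (0:ℝ) = Set.Ioc 0 B ∪ Set.Ioi B := (Set.Ioc_union_Ioi_eq_Ioi hB.le).symm
  rw [hsplit, setIntegral_union (Set.Ioc_disjoint_Ioi le_rfl) measurableSet_Ioi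
    (integrableOn_anti hhanti hh0 hh1 0 B)
    ((integrableOn_congr_fun hzero measurableSet_Ioi).mpr (integrableOn_zero))]
  rw [setIntegral_congr_fun measurableSet_Ioi hzero]
  simp only [integral_zero, add_zero]
  apply setIntegral_mono_on (integrableOn_anti hhanti hh0 hh1 0 B)
    (integrableOn_anti hHanti hH0 hH1 0 B) measurableSet_Ioc
  intro t ht; exact hle t ht.1

open Filter MeasureTheory ProbabilityTheory

set_option maxHeartbeats 1000000 in
/-- Corollary 1: `max_{1 ≤ k ≤ n} P(Sₖ - kG(xₙ) ≥ aₙxₙ) = O(n F̄(xₙ))`. -/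
theorem stmt9 {Ω : Type*} [MeasurableSpace Ω] (μ : Measure Ω) [IsProbabilityMeasure μ]
    (ξ : ℕ → Ω → ℝ) (hmeas : ∀ i, Measurable (ξ i))
    (hindep : iIndepFun ξ μ)
    (hident : ∀ i, IdentDistrib (ξ i) (ξ 0) μ μ)
    (hξ0 : ∀ i ω, 0 ≤ ξ i ω)
    (ℓ Fbar G : ℝ → ℝ)
    (hFbar : ∀ x, Fbar x = (μ {ω | x ≤ ξ 0 ω}).toReal)
    (htail : ∀ x > (0:ℝ), Fbar x = ℓ x / x)
    (hslow : ∀ l > (0:ℝ), Tendsto (fun x => ℓ (l * x) / ℓ x) atTop (nhds 1))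
    (hG : ∀ x, G x = ∫ t in Set.Ioc 0 x, Fbar t)
    (x a : ℕ → ℝ) (hx : ∀ n, 0 < x n) (hapos : ∀ n, 0 < a n)
    (hliminf : ∃ c > (0:ℝ), ∀ᶠ (n : ℕ) in atTop, c ≤ x n / ((n : ℝ) * G (x n)))
    (A : ℝ) (hA : 0 < A) (ha : Tendsto a atTop (nhds A)) :
    ∃ C > (0:ℝ), ∀ᶠ (n : ℕ) in atTop, ∀ k, 1 ≤ k → k ≤ n →
      (μ {ω | a n * x n ≤ (∑ i ∈ Finset.range k, ξ i ω) - (k : ℝ) * G (x n)}).toReal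
        ≤ C * (n : ℝ) * Fbar (x n) := by
  -- basic facts about Fbar
  have hF0 : ∀ t, 0 ≤ Fbar t := fun t => by rw [hFbar]; exact ENNReal.toReal_nonneg
  have hF1 : ∀ t, Fbar t ≤ 1 := fun t => by
    rw [hFbar]
    have := ENNReal.toReal_mono ENNReal.one_ne_top
      (prob_le_one (μ := μ) (s := {ω | t ≤ ξ 0 ω}))
    simpa using this
  have hanti : Antitone Fbar := by
    intro s t hst; rw [hFbar, hFbar]
    exact ENNReal.toReal_mono (measure_ne_top _ _)
      (measure_mono fun ω hω => le_trans hst hω)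
  have hlF : ∀ t, 0 < t → ℓ t = t * Fbar t := by
    intro t ht
    rw [htail t ht]; field_simp
  have hFpos : ∀ t, 0 < Fbar t := by
    intro t
    rcases lt_or_ge 0 (Fbar t) with h | h
    · exact h
    exfalso
    have hFt : Fbar t = 0 := le_antisymm h (hF0 t)
    have hzero : ∀ s, max t 1 ≤ s → ℓ s = 0 := by
      intro s hs
      have hs1 : (1:ℝ) ≤ s := le_trans (le_max_right _ _) hs
      have hs0 : 0 < s := lt_of_lt_of_le one_pos hs1
      have : Fbar s = 0 :=
        le_antisymm (hFt ▸ hanti (le_trans (le_max_left _ _) hs)) (hF0 s)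
      rw [hlF s hs0, this, mul_zero]
    have h0 : Tendsto (fun u => ℓ (2 * u) / ℓ u) atTop (nhds 0) := by
      apply Tendsto.congr' _ tendsto_const_nhds
      filter_upwards [eventually_ge_atTop (max t 1)] with u hu
      rw [hzero u hu, div_zero]
    exact one_ne_zero (tendsto_nhds_unique (hslow 2 two_pos) h0)
  -- ratio bound from slow variation
  obtain ⟨T, hT⟩ := eventually_atTop.mp
    ((hslow 2 two_pos).eventually (eventually_ge_nhds (by norm_num : (3/4:ℝ) < 1)))
  set T₀ : ℝ := max T 1 with hT₀def
  have hT₀1 : (1:ℝ) ≤ T₀ := le_max_right _ _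
  have hratio : ∀ u, T₀ ≤ u → (3/8) * Fbar u ≤ Fbar (2*u) := by
    intro u hu
    have hu1 : (1:ℝ) ≤ u := le_trans hT₀1 hu
    have hu0 : (0:ℝ) < u := lt_of_lt_of_le one_pos hu1
    have h34 : (3/4:ℝ) ≤ ℓ (2 * u) / ℓ u := hT u (le_trans (le_max_left _ _) hu)
    have hℓu : ℓ u = u * Fbar u := hlF u hu0
    have hℓ2u : ℓ (2*u) = (2*u) * Fbar (2*u) := hlF (2*u) (by linarith)
    have hℓupos : 0 < ℓ u := by rw [hℓu]; exact mul_pos hu0 (hFpos u)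
    have := (le_div_iff₀ hℓupos).mp h34
    rw [hℓu, hℓ2u] at this
    nlinarith [hFpos u, hFpos (2*u)]
  -- Karamata bound
  obtain ⟨M, hMpos, hKar⟩ := kara Fbar hanti hF0 hF1 T₀ hT₀1 hratio (hFpos (4*T₀))
  -- integrability of Fbar
  have hGint : ∀ y : ℝ, IntegrableOn Fbar (Set.Ioc 0 y) := integrableOn_anti hanti hF0 hF1 0
  have hGlb : ∀ y : ℝ, 0 < y → y * Fbar y ≤ G y := by
    intro y hy
    have hmono : ∫ _ in Set.Ioc 0 y, Fbar y ≤ ∫ t in Set.Ioc 0 y, Fbar t := by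
      apply setIntegral_mono_on (integrableOn_const (C := Fbar y) measure_Ioc_lt_top.ne)
        (hGint y) measurableSet_Ioc
      intro t ht; exact hanti ht.2
    rw [setIntegral_const, Real.volume_real_Ioc_of_le (by linarith),
      smul_eq_mul, sub_zero] at hmono
    rw [hG]; exact hmono
  -- x n → ∞
  obtain ⟨c, hc, hcev⟩ := hliminf
  have xtend : Tendsto x atTop atTop := by
    rw [tendsto_atTop]
    intro R
    set R' : ℝ := max R 1 with hR'def
    have hFR : 0 < Fbar R' := hFpos R'
    filter_upwards [hcev, eventually_gt_atTop ⌈1/(c*Fbar R')⌉₊] with n hn hn2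
    by_contra hcon
    push_neg at hcon
    have hxnR : x n < R' := lt_of_lt_of_le hcon (le_max_left _ _)
    have hn1 : 1 ≤ n := by omega
    have hnpos : (0:ℝ) < n := by exact_mod_cast Nat.lt_of_lt_of_le Nat.zero_lt_one hn1
    have hGpos : 0 < G (x n) := lt_of_lt_of_le (mul_pos (hx n) (hFpos (x n))) (hGlb _ (hx n))
    have hden : 0 < (n:ℝ) * G (x n) := mul_pos hnpos hGpos
    have h1 : c * ((n:ℝ) * G (x n)) ≤ x n := (le_div_iff₀ hden).mp hn
    have h2 : x n * Fbar R' ≤ G (x n) := by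
      have := hGlb (x n) (hx n)
      have : x n * Fbar R' ≤ x n * Fbar (x n) :=
        mul_le_mul_of_nonneg_left (hanti hxnR.le) (hx n).le
      linarith [hGlb (x n) (hx n)]
    have h2' := mul_le_mul_of_nonneg_left h2 (le_of_lt (mul_pos hc hnpos))
    have h3 : c * ((n:ℝ) * (x n * Fbar R')) ≤ x n := by nlinarith
    have h4 : c * ((n:ℝ) * Fbar R') ≤ 1 := by nlinarith [hx n]
    have h5 : (n:ℝ) ≤ 1/(c * Fbar R') := by
      rw [le_div_iff₀ (mul_pos hc hFR)]; nlinarith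
    have h6 : (1/(c*Fbar R') : ℝ) < n := by
      have := Nat.le_ceil (1/(c*Fbar R'))
      have hlt : (⌈1/(c*Fbar R')⌉₊ : ℝ) < (n:ℝ) := by exact_mod_cast hn2
      linarith
    linarith
  -- the constant
  refine ⟨1 + 4*M/A^2, by positivity, ?_⟩
  filter_upwards [ha.eventually (eventually_ge_nhds (by linarith : A/2 < A)),
    xtend.eventually (eventually_ge_atTop (2*T₀))] with n han hxn
  intro k hk1 hkn
  set X : ℝ := x n with hXdef
  have hX0 : 0 < X := hx n
  have hXT : 2*T₀ ≤ X := hxn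
  -- truncated variables
  set η : ℕ → Ω → ℝ := fun i ω => min (ξ i ω) X with hηdef
  have hηmeas : ∀ i, Measurable (η i) := fun i => (hmeas i).min measurable_const
  have hηnn : ∀ i ω, 0 ≤ η i ω := fun i ω => le_min (hξ0 i ω) hX0.le
  have hηbd : ∀ i ω, η i ω ≤ X := fun i ω => min_le_right _ _
  have hηint : ∀ i, Integrable (η i) μ := by
    intro i
    refine Integrable.mono' (g := fun _ => X) (integrable_const X)
      (hηmeas i).aestronglyMeasurable (Filter.Eventually.of_forall fun ω => ?_)
    rw [Real.norm_eq_abs, abs_of_nonneg (hηnn i ω)]; exact hηbd i ω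
  have hηL2 : ∀ i, MemLp (η i) 2 μ := by
    intro i
    refine MemLp.of_bound (hηmeas i).aestronglyMeasurable X
      (Filter.Eventually.of_forall fun ω => ?_)
    rw [Real.norm_eq_abs, abs_of_nonneg (hηnn i ω)]; exact hηbd i ω
  have hηid : ∀ i, IdentDistrib (η i) (η 0) μ μ := fun i =>
    (hident i).comp (measurable_id.min measurable_const)
  have hηindep : iIndepFun η μ :=
    hindep.comp (fun _ => fun y => min y X) (fun _ => measurable_id.min measurable_const)
  -- first moment
  have hEη : ∫ ω, η 0 ω ∂μ ≤ G X := by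
    rw [hG]
    apply layercake_le μ (η 0) (hηmeas 0) (hηnn 0) X hX0 (hηbd 0) Fbar hanti hF0 hF1
    intro t ht
    rw [hFbar]
    apply ENNReal.toReal_mono (measure_ne_top _ _)
    apply measure_mono
    intro ω hω
    simp only [Set.mem_setOf_eq] at hω ⊢
    exact le_of_lt (lt_of_lt_of_le hω (min_le_left _ _))
  have hEηnn : 0 ≤ ∫ ω, η 0 ω ∂μ := integral_nonneg (hηnn 0)
  -- second moment
  have hsqm : ∫ ω, (η 0 ω)^2 ∂μ ≤ M * (X^2 * Fbar X) := by
    have hlayer : ∫ ω, (η 0 ω)^2 ∂μ ≤ ∫ t in Set.Ioc 0 (X^2), Fbar (Real.sqrt t) := by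
      apply layercake_le μ (fun ω => (η 0 ω)^2) ((hηmeas 0).pow_const 2)
        (fun ω => sq_nonneg _) (X^2) (by positivity)
        (fun ω => pow_le_pow_left₀ (hηnn 0 ω) (hηbd 0 ω) 2)
        (fun t => Fbar (Real.sqrt t))
        (fun s t hst => hanti (Real.sqrt_le_sqrt hst)) (fun t => hF0 _) (fun t => hF1 _)
      intro t ht
      rw [hFbar]
      apply ENNReal.toReal_mono (measure_ne_top _ _)
      apply measure_mono
      intro ω hω
      simp only [Set.mem_setOf_eq] at hω ⊢
      have h1 : Real.sqrt t < Real.sqrt ((η 0 ω)^2) := Real.sqrt_lt_sqrt ht.le hω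
      rw [Real.sqrt_sq (hηnn 0 ω)] at h1
      exact le_of_lt (lt_of_lt_of_le h1 (min_le_left _ _))
    exact hlayer.trans (hKar X hXT)
  -- variance of the sum
  have hVarsum : variance (∑ i ∈ Finset.range k, η i) μ
      = (k:ℝ) * variance (η 0) μ := by
    rw [IndepFun.variance_sum (fun i _ => hηL2 i)
      (fun i _ j _ hij => hηindep.indepFun hij)]
    rw [Finset.sum_congr rfl (fun i _ => (hηid i).variance_eq)]
    simp [Finset.sum_const, nsmul_eq_mul]
  have hVar0 : variance (η 0) μ ≤ ∫ ω, (η 0 ω)^2 ∂μ := by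
    have := variance_le_expectation_sq (μ := μ) (hηmeas 0).aestronglyMeasurable
    simpa using this
  -- mean of the sum
  have hmean : μ[∑ i ∈ Finset.range k, η i] = (k:ℝ) * ∫ ω, η 0 ω ∂μ := by
    simp only [Finset.sum_apply]
    rw [integral_finset_sum _ (fun i _ => hηint i)]
    rw [Finset.sum_congr rfl (fun i _ => (hηid i).integral_eq)]
    simp [Finset.sum_const, nsmul_eq_mul]
  -- Chebyshev
  have hcheb := meas_ge_le_variance_div_sq (μ := μ)
    (memLp_finset_sum' _ (fun i (_ : i ∈ Finset.range k) => hηL2 i))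
    (mul_pos (lt_of_lt_of_le (by linarith) han) hX0)
  -- event inclusion
  set U : Set Ω := ⋃ i ∈ Finset.range k, {ω | X < ξ i ω} with hUdef
  set V : Set Ω := {ω | a n * X ≤ |(∑ i ∈ Finset.range k, η i) ω
      - μ[∑ i ∈ Finset.range k, η i]|} with hVdef
  have hsub : {ω | a n * X ≤ (∑ i ∈ Finset.range k, ξ i ω) - (k:ℝ) * G X} ⊆ U ∪ V := by
    intro ω hω
    by_cases hU : ω ∈ U
    · exact Or.inl hU
    right
    simp only [hUdef, Set.mem_iUnion, Set.mem_setOf_eq, not_exists] at hU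
    have hsum : ∑ i ∈ Finset.range k, ξ i ω = (∑ i ∈ Finset.range k, η i) ω := by
      rw [Finset.sum_apply]
      apply Finset.sum_congr rfl
      intro i hi
      have : ξ i ω ≤ X := le_of_not_gt (hU i hi)
      simp [hηdef, min_eq_left this]
    simp only [Set.mem_setOf_eq] at hω ⊢
    have hkG : μ[∑ i ∈ Finset.range k, η i] ≤ (k:ℝ) * G X := by
      rw [hmean]
      exact mul_le_mul_of_nonneg_left hEη (Nat.cast_nonneg k)
    have : a n * X ≤ (∑ i ∈ Finset.range k, η i) ω - μ[∑ i ∈ Finset.range k, η i] := by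
      rw [← hsum]; linarith
    exact this.trans (le_abs_self _)
  -- measure bound
  have hU_bound : μ U ≤ (k : ℝ≥0∞) * μ {ω | X ≤ ξ 0 ω} := by
    calc μ U ≤ ∑ i ∈ Finset.range k, μ {ω | X < ξ i ω} :=
          measure_biUnion_finset_le _ _
      _ = ∑ i ∈ Finset.range k, μ {ω | X < ξ 0 ω} := by
          apply Finset.sum_congr rfl
          intro i _
          have : {ω | X < ξ i ω} = ξ i ⁻¹' (Set.Ioi X) := rfl
          rw [this, show {ω | X < ξ 0 ω} = ξ 0 ⁻¹' (Set.Ioi X) from rfl,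
            (hident i).measure_mem_eq measurableSet_Ioi]
      _ = (k : ℝ≥0∞) * μ {ω | X < ξ 0 ω} := by
          rw [Finset.sum_const, Finset.card_range, nsmul_eq_mul]
      _ ≤ (k : ℝ≥0∞) * μ {ω | X ≤ ξ 0 ω} := by
          apply mul_le_mul_right
          exact measure_mono fun ω (hω : X < ξ 0 ω) => le_of_lt hω
  have hmeasure : μ {ω | a n * X ≤ (∑ i ∈ Finset.range k, ξ i ω) - (k:ℝ) * G X}
      ≤ (k : ℝ≥0∞) * μ {ω | X ≤ ξ 0 ω}
        + ENNReal.ofReal (variance (∑ i ∈ Finset.range k, η i) μ / (a n * X)^2) := by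
    calc μ {ω | a n * X ≤ (∑ i ∈ Finset.range k, ξ i ω) - (k:ℝ) * G X}
        ≤ μ (U ∪ V) := measure_mono hsub
      _ ≤ μ U + μ V := measure_union_le _ _
      _ ≤ _ := add_le_add hU_bound hcheb
  -- pass to toReal
  have hfin1 : (k : ℝ≥0∞) * μ {ω | X ≤ ξ 0 ω} ≠ ⊤ :=
    ENNReal.mul_ne_top (ENNReal.natCast_ne_top k) (measure_ne_top _ _)
  have htoReal : (μ {ω | a n * X ≤ (∑ i ∈ Finset.range k, ξ i ω) - (k:ℝ) * G X}).toReal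
      ≤ (k:ℝ) * Fbar X + variance (∑ i ∈ Finset.range k, η i) μ / (a n * X)^2 := by
    have h1 := ENNReal.toReal_mono
      (by exact ENNReal.add_ne_top.mpr ⟨hfin1, ENNReal.ofReal_ne_top⟩) hmeasure
    rw [ENNReal.toReal_add hfin1 ENNReal.ofReal_ne_top, ENNReal.toReal_mul,
      ENNReal.toReal_natCast,
      ENNReal.toReal_ofReal (div_nonneg (variance_nonneg _ _) (sq_nonneg _))] at h1
    rw [hFbar]
    exact h1
  -- final numeric estimate
  have hvarbound : variance (∑ i ∈ Finset.range k, η i) μ / (a n * X)^2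
      ≤ 4*M/A^2 * ((n:ℝ) * Fbar X) := by
    have hka : variance (∑ i ∈ Finset.range k, η i) μ ≤ (n:ℝ) * (M * (X^2 * Fbar X)) := by
      rw [hVarsum]
      have hkn' : (k:ℝ) ≤ (n:ℝ) := by exact_mod_cast hkn
      have h2 : variance (η 0) μ ≤ M * (X^2 * Fbar X) := hVar0.trans hsqm
      have hvnn : 0 ≤ variance (η 0) μ := variance_nonneg _ _
      nlinarith [Nat.cast_nonneg (α := ℝ) k]
    have hA2 : 0 < (A/2) * X := mul_pos (by linarith) hX0
    have haX : (A/2) * X ≤ a n * X := mul_le_mul_of_nonneg_right han hX0.le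
    have hsq : ((A/2) * X)^2 ≤ (a n * X)^2 := by nlinarith
    calc variance (∑ i ∈ Finset.range k, η i) μ / (a n * X)^2
        ≤ variance (∑ i ∈ Finset.range k, η i) μ / ((A/2) * X)^2 := by
          apply div_le_div_of_nonneg_left (variance_nonneg _ _) (by positivity) hsq
      _ ≤ ((n:ℝ) * (M * (X^2 * Fbar X))) / ((A/2) * X)^2 := by
          exact (div_le_div_iff_of_pos_right (by positivity)).mpr hka
      _ = 4*M/A^2 * ((n:ℝ) * Fbar X) := by
          field_simp
          ring
  calc (μ {ω | a n * X ≤ (∑ i ∈ Finset.range k, ξ i ω) - (k:ℝ) * G X}).toReal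
      ≤ (k:ℝ) * Fbar X + variance (∑ i ∈ Finset.range k, η i) μ / (a n * X)^2 := htoReal
    _ ≤ (n:ℝ) * Fbar X + 4*M/A^2 * ((n:ℝ) * Fbar X) := by
        have hkn' : (k:ℝ) ≤ (n:ℝ) := by exact_mod_cast hkn
        have := mul_le_mul_of_nonneg_right hkn' (hF0 X)
        linarith
    _ = (1 + 4*M/A^2) * (n:ℝ) * Fbar X := by ring
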